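/- Let c ∈ ℝ, let t > 1 be such that log x > c for all x ≥ t, let ξ ≥ 0, and let k ∈ ℕ. Then for Re(s) > −ξ sufficiently large, ∫_t^∞ x^{−2s−2ξ−1} (c − log x)^k dx = Σ_{j=0}^{k} σ_{kj} / (s+ξ)^{j+1} plus an entire function of s, where σ_{kj} = (−1)^k · C(k,j) · j!/2^{j+1} · (−c)^{k−j}. -/

import Mathlib

open Complex MeasureTheory Set Filter Asymptotics

lemma contOn_aux (w : ℂ) (j : ℕ) :
    ContinuousOn (fun x : ℝ => (x : ℂ) ^ w * (Real.log x : ℂ) ^ j) {x : ℝ | 0 < x} := by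
  intro x hx
  exact ((continuousAt_ofReal_cpow_const x w (Or.inr (ne_of_gt hx))).mul
    (((Real.continuousAt_log (ne_of_gt hx)).ofReal.pow j))).continuousWithinAt

lemma integrableOn_aux {a : ℂ} (ha : 0 < a.re) (j : ℕ) :
    IntegrableOn (fun x : ℝ => (x : ℂ) ^ (-a - 1) * (Real.log x : ℂ) ^ j) (Ioi 1) := by
  have hcont : ContinuousOn (fun x : ℝ => (x : ℂ) ^ (-a - 1) * (Real.log x : ℂ) ^ j) (Ici 1) :=
    (contOn_aux (-a - 1) j).mono (fun x hx => show (0:ℝ) < x from lt_of_lt_of_le one_pos hx)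
  have hO : (fun x : ℝ => (x : ℂ) ^ (-a - 1) * (Real.log x : ℂ) ^ j)
      =O[atTop] fun x : ℝ => x ^ (-1 - a.re / 2) := by
    have h1 : (fun x : ℝ => (Real.log x) ^ j) =o[atTop] fun x : ℝ => x ^ (a.re / 2) := by
      simpa [Real.rpow_natCast] using
        isLittleO_log_rpow_rpow_atTop (j : ℝ) (half_pos ha)
    have h2 : (fun x : ℝ => (x : ℂ) ^ (-a - 1)) =O[atTop] fun x : ℝ => x ^ (-a.re - 1) := by
      apply IsBigO.of_bound 1
      filter_upwards [eventually_gt_atTop (0 : ℝ)] with x hx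
      rw [one_mul, Complex.norm_cpow_eq_rpow_re_of_pos hx,
        Real.norm_eq_abs, Real.abs_rpow_of_nonneg hx.le, abs_of_pos hx]
      simp
    have h3 : (fun x : ℝ => (Real.log x : ℂ) ^ j) =O[atTop] fun x : ℝ => x ^ (a.re / 2) := by
      rw [show (fun x : ℝ => (Real.log x : ℂ) ^ j) = fun x : ℝ => ((Real.log x ^ j : ℝ) : ℂ) by
        push_cast; rfl]
      exact Complex.isBigO_ofReal_left.mpr h1.isBigO
    refine (h2.mul h3).congr' EventuallyEq.rfl ?_
    filter_upwards [eventually_gt_atTop (0 : ℝ)] with x hx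
    rw [← Real.rpow_add hx]
    ring_nf
  refine IntegrableOn.mono_set ?_ Ioi_subset_Ici_self
  refine (hcont.locallyIntegrableOn measurableSet_Ici).integrableOn_of_isBigO_atTop hO
    ⟨Ioi 1, Ioi_mem_atTop 1, integrableOn_Ioi_rpow_of_lt (by linarith) one_pos⟩

lemma J_aux {a : ℂ} (ha : 0 < a.re) (j : ℕ) :
    ∫ x in Ioi (1 : ℝ), (x : ℂ) ^ (-a - 1) * (Real.log x : ℂ) ^ j
      = (j.factorial : ℂ) / a ^ (j + 1) := by
  have ha0 : a ≠ 0 := fun h => by simp [h] at ha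
  induction j with
  | zero =>
    simp only [pow_zero, mul_one, Nat.factorial_zero, Nat.cast_one, pow_one]
    rw [integral_Ioi_cpow_of_lt (by simp; linarith) one_pos]
    simp
  | succ j ih =>
    have hx0 : ∀ x : ℝ, 1 ≤ x → (0:ℝ) < x := fun x hx => lt_of_lt_of_le one_pos hx
    set g : ℝ → ℂ := fun x => (-(1:ℂ)/a) * ((x : ℂ) ^ (-a) * (Real.log x : ℂ) ^ (j + 1)) with hg
    set f' : ℝ → ℂ := fun x => (x : ℂ) ^ (-a - 1) * (Real.log x : ℂ) ^ (j + 1)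
      - ((j:ℂ) + 1)/a * ((x : ℂ) ^ (-a - 1) * (Real.log x : ℂ) ^ j) with hf'
    have hderiv : ∀ x ∈ Ici (1:ℝ), HasDerivAt g (f' x) x := by
      intro x hx
      have hx0 : (0:ℝ) < x := hx0 x hx
      have h1 : HasDerivAt (fun y : ℝ => (y : ℂ) ^ (-a)) (-a * (x : ℂ) ^ (-a - 1)) x := by
        have hne : (-a - 1 : ℂ) ≠ -1 := by
          intro h; apply ha0; have := congrArg (· + 1) h; simpa using this
        have h0 := (hasDerivAt_ofReal_cpow_const' (ne_of_gt hx0) hne).const_mul (-a)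
        have e1 : (-a - 1 + 1 : ℂ) = -a := by ring
        rw [e1] at h0
        have hfun : (fun y : ℝ => -a * ((y:ℂ) ^ (-a) / (-a))) = fun y : ℝ => (y:ℂ) ^ (-a) := by
          funext y; field_simp
        rwa [hfun] at h0
      have h2 : HasDerivAt (fun y : ℝ => (Real.log y : ℂ) ^ (j + 1))
          (((j:ℂ) + 1) * (Real.log x : ℂ) ^ j * (x⁻¹ : ℝ)) x := by
        have hl : HasDerivAt (fun y : ℝ => (Real.log y : ℂ)) ((x⁻¹ : ℝ) : ℂ) x :=
          (Real.hasDerivAt_log (ne_of_gt hx0)).ofReal_comp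
        have := (hasDerivAt_pow (j + 1) ((Real.log x : ℂ))).comp x hl
        refine this.congr_deriv ?_
        push_cast
        ring
      have hda := ((h1.mul h2).const_mul (-(1:ℂ)/a))
      refine hda.congr_deriv ?_
      have hsplit : (x : ℂ) ^ (-a - 1) = (x : ℂ) ^ (-a) * (x : ℂ)⁻¹ := by
        rw [sub_eq_add_neg, cpow_add _ _ (ofReal_ne_zero.mpr (ne_of_gt hx0)), cpow_neg_one]
      simp only [hf', hsplit]
      push_cast [ofReal_inv]
      have hxne : (x : ℂ) ≠ 0 := ofReal_ne_zero.mpr (ne_of_gt hx0)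
      field_simp
      ring
    have htends : Tendsto g atTop (nhds 0) := by
      have h1 : Tendsto (fun x : ℝ => ‖(-(1:ℂ)/a)‖
          * (Real.log x ^ ((j:ℝ) + 1) / x ^ a.re)) atTop (nhds 0) := by
        have := (isLittleO_log_rpow_rpow_atTop ((j:ℝ) + 1) ha).tendsto_div_nhds_zero
        simpa using this.const_mul ‖(-(1:ℂ)/a)‖
      apply squeeze_zero_norm' _ h1
      filter_upwards [eventually_ge_atTop (1:ℝ)] with x hx
      have hx0 : (0:ℝ) < x := lt_of_lt_of_le one_pos hx
      have hlog : (0:ℝ) ≤ Real.log x := Real.log_nonneg hx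
      rw [hg]
      rw [norm_mul, norm_mul,
        Complex.norm_cpow_eq_rpow_re_of_pos hx0, ← Complex.ofReal_pow, Complex.norm_real, Real.norm_eq_abs,
        _root_.abs_of_nonneg (pow_nonneg hlog _)]
      have e1 : Real.log x ^ ((j:ℝ) + 1) = Real.log x ^ (j + 1) := by
        rw [show ((j:ℝ) + 1) = ((j + 1 : ℕ) : ℝ) by push_cast; ring, Real.rpow_natCast]
      rw [e1, neg_re, Real.rpow_neg hx0.le]
      apply le_of_eq
      ring
    have hint1 := integrableOn_aux ha (j + 1)
    have hint0 := integrableOn_aux ha j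
    have hf'int : IntegrableOn f' (Ioi 1) := by
      rw [hf']
      exact hint1.sub (hint0.const_mul _)
    have key := integral_Ioi_of_hasDerivAt_of_tendsto' hderiv hf'int htends
    have hg1 : g 1 = 0 := by simp [hg]
    rw [hg1, zero_sub, neg_zero] at key
    simp only [hf'] at key
    rw [MeasureTheory.integral_sub hint1 (hint0.const_mul _)] at key
    rw [MeasureTheory.integral_const_mul, ih] at key
    have : (∫ x in Ioi (1:ℝ), (x:ℂ) ^ (-a - 1) * (Real.log x : ℂ) ^ (j+1))
        = ((j:ℂ) + 1)/a * ((j.factorial : ℂ) / a ^ (j + 1)) := by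
      linear_combination key
    rw [this, Nat.factorial_succ, pow_succ]
    push_cast
    rw [div_mul_div_comm, mul_comm a]
    ring

lemma diff_aux (c t : ℝ) (ht : 1 < t) (ξ : ℝ) (k : ℕ) :
    Differentiable ℂ (fun s : ℂ => ∫ x in Ioc (1:ℝ) t,
      (x : ℂ) ^ (-2 * s - 2 * (ξ : ℂ) - 1) * ((c : ℂ) - (Real.log x : ℂ)) ^ k) := by
  set w : ℂ → ℂ := fun s => -2 * s - 2 * (ξ : ℂ) - 1 with hw
  set F : ℂ → ℝ → ℂ := fun s x => (x : ℂ) ^ (w s) * ((c : ℂ) - (Real.log x : ℂ)) ^ k with hF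
  set F' : ℂ → ℝ → ℂ :=
    fun s x => (x : ℂ) ^ (w s) * ((c : ℂ) - (Real.log x : ℂ)) ^ k
      * (-2 * (Real.log x : ℂ)) with hF'def
  have contF : ∀ s : ℂ, ContinuousOn (F s) (Icc 1 t) := by
    intro s x hx
    have hx0 : (0:ℝ) < x := lt_of_lt_of_le one_pos hx.1
    exact ((continuousAt_ofReal_cpow_const x (w s) (Or.inr (ne_of_gt hx0))).mul
      ((continuousAt_const.sub (Real.continuousAt_log (ne_of_gt hx0)).ofReal).pow
        k)).continuousWithinAt
  have contF' : ∀ s : ℂ, ContinuousOn (F' s) (Icc 1 t) := by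
    intro s
    refine (contF s).mul ?_
    intro x hx
    have hx0 : (0:ℝ) < x := lt_of_lt_of_le one_pos hx.1
    exact (continuousAt_const.mul
      (Real.continuousAt_log (ne_of_gt hx0)).ofReal).continuousWithinAt
  intro s₀
  set R : ℝ := 2 * |s₀.re| + 2 * |ξ| + 3 with hR
  have hR0 : 0 ≤ R := by positivity
  set B : ℝ := t ^ R * ((|c| + Real.log t) ^ k * (2 * Real.log t)) with hB
  have hlogt : 0 ≤ Real.log t := Real.log_nonneg ht.le
  have key := hasDerivAt_integral_of_dominated_loc_of_deriv_le (μ := volume.restrict (Ioc 1 t))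
    (F := F) (F' := F') (x₀ := s₀) (bound := fun _ => B) (Metric.ball_mem_nhds s₀ one_pos)
    (Filter.Eventually.of_forall fun s =>
      (((contF s).mono Ioc_subset_Icc_self).aestronglyMeasurable measurableSet_Ioc))
    (((contF s₀).integrableOn_Icc).mono_set Ioc_subset_Icc_self)
    (((contF' s₀).mono Ioc_subset_Icc_self).aestronglyMeasurable measurableSet_Ioc)
    ?_ ?_ ?_
  · exact key.2.differentiableAt
  · -- h_bound
    filter_upwards [ae_restrict_mem measurableSet_Ioc] with x hx s hs
    have hx1 : (1:ℝ) ≤ x := hx.1.le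
    have hx0 : (0:ℝ) < x := lt_of_lt_of_le one_pos hx1
    have hlogx : 0 ≤ Real.log x := Real.log_nonneg hx1
    have hlogxt : Real.log x ≤ Real.log t := Real.log_le_log hx0 hx.2
    have hre : |(w s).re| ≤ R := by
      have h1 : (w s).re = -2 * s.re - 2 * ξ - 1 := by
        simp [hw, sub_re, mul_re, ofReal_re, ofReal_im]
      have h2 : |s.re - s₀.re| ≤ 1 := by
        have := Complex.abs_re_le_norm (s - s₀)
        rw [Complex.sub_re] at this
        rw [Metric.mem_ball, Complex.dist_eq] at hs
        exact le_trans this hs.le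
      rw [h1, hR, abs_le]
      have h3 : |s.re| ≤ |s₀.re| + 1 := by
        have := abs_sub_abs_le_abs_sub s.re s₀.re
        linarith
      have h4 := abs_le.mp h3
      have h5 := le_abs_self ξ
      have h6 := neg_abs_le ξ
      obtain ⟨h4a, h4b⟩ := h4
      constructor <;> linarith
    have hnorm : ‖F' s x‖ = x ^ (w s).re * |c - Real.log x| ^ k * (2 * Real.log x) := by
      rw [hF'def]
      simp only [norm_mul, Complex.norm_cpow_eq_rpow_re_of_pos hx0]
      congr 1
      · congr 1
        rw [show (c:ℂ) - (Real.log x:ℂ) = ((c - Real.log x : ℝ) : ℂ) by push_cast; ring,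
          ← Complex.ofReal_pow, Complex.norm_real, Real.norm_eq_abs, _root_.abs_pow]
      · rw [Complex.norm_real, Real.norm_eq_abs, _root_.abs_of_nonneg hlogx]
        norm_num
    rw [hnorm, hB]
    have hA : x ^ (w s).re ≤ t ^ R := by
      calc x ^ (w s).re ≤ x ^ R :=
            Real.rpow_le_rpow_of_exponent_le hx1 (le_trans (le_abs_self _) hre)
        _ ≤ t ^ R := Real.rpow_le_rpow hx0.le hx.2 hR0
    have hBB : |c - Real.log x| ^ k ≤ (|c| + Real.log t) ^ k := by
      apply pow_le_pow_left₀ (abs_nonneg _)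
      calc |c - Real.log x| ≤ |c| + |Real.log x| := abs_sub _ _
        _ ≤ |c| + Real.log t := by rw [_root_.abs_of_nonneg hlogx]; linarith
    have hC : 2 * Real.log x ≤ 2 * Real.log t := by linarith
    calc x ^ (w s).re * |c - Real.log x| ^ k * (2 * Real.log x)
        ≤ t ^ R * ((|c| + Real.log t) ^ k) * (2 * Real.log t) := by
          apply mul_le_mul (mul_le_mul hA hBB (by positivity) (by positivity)) hC
            (by positivity) (by positivity)
      _ = t ^ R * ((|c| + Real.log t) ^ k * (2 * Real.log t)) := by ring
  · -- bound integrable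
    rw [MeasureTheory.integrable_const_iff]
    right
    exact ⟨by rw [Measure.restrict_apply_univ]; exact measure_Ioc_lt_top⟩
  · -- h_diff
    filter_upwards [ae_restrict_mem measurableSet_Ioc] with x hx s _
    have hx0 : (0:ℝ) < x := lt_of_lt_of_le one_pos hx.1.le
    have hxne : (x : ℂ) ≠ 0 := ofReal_ne_zero.mpr (ne_of_gt hx0)
    have hlog : Complex.log (x : ℂ) = (Real.log x : ℂ) := (Complex.ofReal_log hx0.le).symm
    have hFe : (fun s : ℂ => F s x)
        = fun s : ℂ => Complex.exp (Complex.log (x : ℂ) * w s)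
            * ((c : ℂ) - (Real.log x : ℂ)) ^ k := by
      funext s
      rw [hF]
      simp only
      rw [Complex.cpow_def_of_ne_zero hxne]
    rw [hFe]
    have h1 : HasDerivAt (fun s : ℂ => Complex.log (x : ℂ) * w s)
        (Complex.log (x : ℂ) * (-2)) s := by
      have : HasDerivAt w (-2 : ℂ) s := by
        rw [hw]
        simpa using (((hasDerivAt_id s).const_mul (-2 : ℂ)).sub_const (2 * (ξ:ℂ))).sub_const 1
      exact this.const_mul _
    have h2 := (h1.cexp).mul_const (((c : ℂ) - (Real.log x : ℂ)) ^ k)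
    refine h2.congr_deriv ?_
    rw [hF'def]
    simp only
    rw [Complex.cpow_def_of_ne_zero hxne, hlog]
    ring

/-- For `c ∈ ℝ`, `t > 1` with `log x > c` for `x ≥ t`, `ξ ≥ 0` and `k ∈ ℕ`, the integral
`∫_t^∞ x^{−2s−2ξ−1}(c − log x)^k dx` equals `Σ_{j=0}^k σ_{kj}/(s+ξ)^{j+1}` plus an entire
function of `s`, where `σ_{kj} = (−1)^k C(k,j) (j!/2^{j+1}) (−c)^{k−j}`; the integral
formula holds on the half-plane `Re s + ξ > 0` of convergence. -/
theorem integral_pole_decomposition (c : ℝ) (t : ℝ) (ht : 1 < t)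
    (hlog : ∀ x : ℝ, t ≤ x → c < Real.log x) (ξ : ℝ) (hξ : 0 ≤ ξ) (k : ℕ) :
    ∃ E : ℂ → ℂ, Differentiable ℂ E ∧
      ∀ s : ℂ, 0 < s.re + ξ →
        (∫ x in Set.Ioi t, (x : ℂ) ^ (-2 * s - 2 * (ξ : ℂ) - 1) *
            ((c : ℂ) - (Real.log x : ℂ)) ^ k) =
          (∑ j ∈ Finset.range (k + 1),
            ((-1 : ℂ) ^ k * (k.choose j) * ((j.factorial : ℂ) / 2 ^ (j + 1)) *
              (-(c : ℂ)) ^ (k - j)) / (s + ξ) ^ (j + 1)) + E s := by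
  refine ⟨fun s => -(∫ x in Ioc (1:ℝ) t,
      (x : ℂ) ^ (-2 * s - 2 * (ξ : ℂ) - 1) * ((c : ℂ) - (Real.log x : ℂ)) ^ k),
    (diff_aux c t ht ξ k).neg, fun s hs => ?_⟩
  set a : ℂ := 2 * s + 2 * (ξ : ℂ) with ha_def
  have ha : 0 < a.re := by
    simp [ha_def, add_re, mul_re, ofReal_re, ofReal_im]
    linarith
  have hsξ : (s + (ξ : ℂ)) ≠ 0 := by
    intro h
    have : (s + (ξ : ℂ)).re = 0 := by rw [h]; simp
    simp [add_re, ofReal_re] at this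
    linarith
  have he : -2 * s - 2 * (ξ : ℂ) - 1 = -a - 1 := by rw [ha_def]; ring
  set f : ℝ → ℂ := fun x => (x : ℂ) ^ (-a - 1) * ((c : ℂ) - (Real.log x : ℂ)) ^ k with hf
  have hexp : f = fun x : ℝ => ∑ j ∈ Finset.range (k + 1),
      ((k.choose j : ℂ) * (c : ℂ) ^ (k - j) * (-1) ^ j)
        * ((x : ℂ) ^ (-a - 1) * (Real.log x : ℂ) ^ j) := by
    funext x
    rw [hf]
    simp only
    rw [show ((c : ℂ) - (Real.log x : ℂ)) = (-(Real.log x : ℂ) + (c : ℂ)) by ring, add_pow,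
      Finset.mul_sum]
    refine Finset.sum_congr rfl fun j hj => ?_
    rw [neg_pow]
    ring
  have hint : ∀ j : ℕ, IntegrableOn
      (fun x : ℝ => (x : ℂ) ^ (-a - 1) * (Real.log x : ℂ) ^ j) (Ioi 1) :=
    fun j => integrableOn_aux ha j
  have hintf : IntegrableOn f (Ioi 1) := by
    rw [hexp]
    exact MeasureTheory.integrable_finset_sum _ (fun j _ => (hint j).const_mul _)
  have hIoi1 : ∫ x in Ioi (1:ℝ), f x = ∑ j ∈ Finset.range (k + 1),
      ((k.choose j : ℂ) * (c : ℂ) ^ (k - j) * (-1) ^ j) * ((j.factorial : ℂ) / a ^ (j + 1)) := by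
    rw [hexp, MeasureTheory.integral_finset_sum _ (fun j _ => (hint j).const_mul _)]
    exact Finset.sum_congr rfl fun j _ => by
      rw [MeasureTheory.integral_const_mul, J_aux ha j]
  have hsplit : ∫ x in Ioi (1:ℝ), f x = (∫ x in Ioc (1:ℝ) t, f x) + ∫ x in Ioi t, f x := by
    rw [← Set.Ioc_union_Ioi_eq_Ioi ht.le]
    exact MeasureTheory.setIntegral_union (Set.Ioc_disjoint_Ioi le_rfl) measurableSet_Ioi
      (hintf.mono_set Set.Ioc_subset_Ioi_self) (hintf.mono_set (Set.Ioi_subset_Ioi ht.le))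
  have hsum : (∑ j ∈ Finset.range (k + 1),
      ((k.choose j : ℂ) * (c : ℂ) ^ (k - j) * (-1) ^ j) * ((j.factorial : ℂ) / a ^ (j + 1)))
      = ∑ j ∈ Finset.range (k + 1),
        ((-1 : ℂ) ^ k * (k.choose j) * ((j.factorial : ℂ) / 2 ^ (j + 1)) *
          (-(c : ℂ)) ^ (k - j)) / (s + ξ) ^ (j + 1) := by
    refine Finset.sum_congr rfl fun j hj => ?_
    have hjk : j ≤ k := by
      have := Finset.mem_range.mp hj; omega
    have key : (-1 : ℂ) ^ k * (-(c : ℂ)) ^ (k - j) = (-1) ^ j * (c : ℂ) ^ (k - j) := by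
      rw [show (-(c:ℂ)) ^ (k - j) = (-1) ^ (k - j) * (c:ℂ) ^ (k - j) from neg_pow _ _,
        ← mul_assoc, ← pow_add,
        show k + (k - j) = 2 * (k - j) + j by omega, pow_add, pow_mul]
      norm_num
    have ha2 : a ^ (j + 1) = 2 ^ (j + 1) * (s + (ξ : ℂ)) ^ (j + 1) := by
      rw [ha_def, show (2 * s + 2 * (ξ:ℂ)) = 2 * (s + ξ) by ring, mul_pow]
    rw [ha2]
    have h2 : (2:ℂ) ^ (j+1) ≠ 0 := pow_ne_zero _ two_ne_zero
    have hS : (s + (ξ:ℂ)) ^ (j+1) ≠ 0 := pow_ne_zero _ hsξ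
    field_simp
    linear_combination (-(((k.choose j : ℂ)) * (j.factorial : ℂ))) * key
  simp only [he]
  have : (∫ x in Ioi t, f x) = (∫ x in Ioi (1:ℝ), f x) - ∫ x in Ioc (1:ℝ) t, f x := by
    rw [hsplit]; ring
  rw [this, hIoi1, hsum, sub_eq_add_neg]
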